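/- Let A and B be positive (self-adjoint, nonnegative) bounded linear operators on a complex Hilbert space H. Then ‖A^{1/2} B^{1/2}‖ ≤ ‖A B‖^{1/2}, where A^{1/2} denotes the positive square root of A and ‖·‖ is the operator norm. -/

import Mathlib

open scoped ENNReal

lemma spectralRadius_mul_comm' {A : Type*} [NormedRing A] [NormedAlgebra ℂ A] (a b : A) :
    spectralRadius ℂ (a * b) = spectralRadius ℂ (b * a) := by
  have key : ∀ x y : A, spectralRadius ℂ (x * y) ≤ spectralRadius ℂ (y * x) := by
    intro x y
    refine iSup₂_le fun k hk => ?_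
    by_cases h0 : k = 0
    · simp [h0]
    · have : k ∈ spectrum ℂ (y * x) \ {0} := by
        rw [← spectrum.nonzero_mul_comm]
        exact ⟨hk, h0⟩
      exact le_iSup₂ (f := fun k (_ : k ∈ spectrum ℂ (y * x)) => (‖k‖₊ : ℝ≥0∞)) k this.1
  exact le_antisymm (key a b) (key b a)

set_option synthInstance.maxHeartbeats 1000000
/-- For positive operators `A, B` on a complex Hilbert space,
`‖A^{1/2} B^{1/2}‖ ≤ ‖A B‖^{1/2}`. -/
theorem sqrt_mul_sqrt_norm_le {H : Type*} [NormedAddCommGroup H] [InnerProductSpace ℂ H]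
    [CompleteSpace H] (A B : H →L[ℂ] H) (hA : A.IsPositive) (hB : B.IsPositive) :
    ‖CFC.sqrt A * CFC.sqrt B‖ ≤ Real.sqrt ‖A * B‖ := by
  rcases subsingleton_or_nontrivial H with hH | hH
  · have h0 : (CFC.sqrt A * CFC.sqrt B : H →L[ℂ] H) = 0 := Subsingleton.elim _ _
    rw [h0, norm_zero]
    exact Real.sqrt_nonneg _
  · have hA' : (0 : H →L[ℂ] H) ≤ A := (ContinuousLinearMap.nonneg_iff_isPositive A).mpr hA
    have hB' : (0 : H →L[ℂ] H) ≤ B := (ContinuousLinearMap.nonneg_iff_isPositive B).mpr hB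
    set a := CFC.sqrt A with ha_def
    set b := CFC.sqrt B with hb_def
    have ha : (0 : H →L[ℂ] H) ≤ a := CFC.sqrt_nonneg (a := A)
    have hb : (0 : H →L[ℂ] H) ≤ b := CFC.sqrt_nonneg (a := B)
    rw [Real.le_sqrt (norm_nonneg _)]
    swap
    · exact norm_nonneg _
    have h1 : ‖a * b‖ ^ 2 = ‖star (a * b) * (a * b)‖ := by
      rw [CStarRing.norm_star_mul_self, sq]
    have h2 : star (a * b) * (a * b) = b * A * b := by
      rw [star_mul, (IsSelfAdjoint.of_nonneg ha).star_eq, (IsSelfAdjoint.of_nonneg hb).star_eq]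
      calc b * a * (a * b) = b * (a * a) * b := by noncomm_ring
        _ = b * A * b := by rw [CFC.sqrt_mul_sqrt_self A hA']
    have hsa : IsSelfAdjoint (b * A * b) :=
      (IsSelfAdjoint.of_nonneg hA').conjugate_self (IsSelfAdjoint.of_nonneg hb)
    have h3 : (‖b * A * b‖₊ : ℝ≥0∞) ≤ (‖A * B‖₊ : ℝ≥0∞) := by
      calc (‖b * A * b‖₊ : ℝ≥0∞) = spectralRadius ℂ (b * (A * b)) := by
            rw [← hsa.spectralRadius_eq_nnnorm, mul_assoc]
        _ = spectralRadius ℂ ((A * b) * b) := spectralRadius_mul_comm' b (A * b)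
        _ = spectralRadius ℂ (A * B) := by
            rw [mul_assoc, CFC.sqrt_mul_sqrt_self B hB']
        _ ≤ ‖A * B‖₊ := spectrum.spectralRadius_le_nnnorm _
    have h4 : ‖b * A * b‖ ≤ ‖A * B‖ := by
      exact_mod_cast ENNReal.coe_le_coe.mp h3
    rw [h1, h2]
    exact h4
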